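/- Structure Theorem for Unions of Sets of Lengths: Let H be an atomic cancellative monoid with finite nonempty set of distances Δ(H) and d = min Δ(H). Suppose that either ρ_k(H) = ∞ for some k ∈ ℕ, or there is M ∈ ℕ with ρ_k(H) − ρ_{k−1}(H) ≤ M for all k ≥ 2. Then there exist constants k* and M* ∈ ℕ such that for all k ≥ k*, the set U_k(H) is an almost arithmetical progression with difference d and bound M*. Moreover, if ρ_k(H) < ∞ for all k ∈ ℕ, then the assertion holds with k* = 1. -/

import Mathlib

open scoped Classical ENNReal

/-- The set of lengths of `a`: all `k` such that `a` is a product of `k` irreducibles,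
with the convention `L(a) = {0}` for units. -/
noncomputable def lengths {M : Type*} [Monoid M] (a : M) : Set ℕ :=
  if IsUnit a then {0}
  else {k | ∃ l : List M, l.length = k ∧ (∀ x ∈ l, Irreducible x) ∧ l.prod = a}

/-- A monoid is atomic if every nonunit is a finite product of irreducibles (atoms). -/
def Atomic (M : Type*) [Monoid M] : Prop :=
  ∀ a : M, ¬IsUnit a → ∃ l : List M, (∀ x ∈ l, Irreducible x) ∧ l.prod = a

/-- The set of distances of a set `L ⊆ ℕ`. -/
def distances (L : Set ℕ) : Set ℕ :=
  {d | 0 < d ∧ ∃ k ∈ L, k + d ∈ L ∧ ∀ m ∈ L, k ≤ m → m ≤ k + d → m = k ∨ m = k + d}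

/-- The set of distances `Δ(H)` of a monoid. -/
def DeltaH (M : Type*) [Monoid M] : Set ℕ :=
  ⋃ a : M, distances (lengths a)

/-- The union `U_k(H)` of all sets of lengths containing `k`. -/
def lengthUnion (M : Type*) [Monoid M] (k : ℕ) : Set ℕ :=
  {ℓ | ∃ l1 l2 : List M, l1.length = k ∧ l2.length = ℓ ∧
      (∀ x ∈ l1, Irreducible x) ∧ (∀ x ∈ l2, Irreducible x) ∧ l1.prod = l2.prod}

/-- The `k`-th elasticity `ρ_k(H) = sup U_k(H)`, valued in `ℝ≥0∞`. -/
noncomputable def rhoK (M : Type*) [Monoid M] (k : ℕ) : ℝ≥0∞ :=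
  ⨆ ℓ ∈ lengthUnion M k, (ℓ : ℝ≥0∞)

/-- `λ_k(H) = min U_k(H)`. -/
noncomputable def lamK (M : Type*) [Monoid M] (k : ℕ) : ℕ :=
  sInf (lengthUnion M k)

/-- The elasticity `ρ(L) = sup L / min L` of a set of lengths, with `ρ({0}) = 1`. -/
noncomputable def setElasticity (L : Set ℕ) : ℝ≥0∞ :=
  if L = {0} then 1 else (⨆ n ∈ L, (n : ℝ≥0∞)) / ((sInf L : ℕ) : ℝ≥0∞)

/-- The elasticity `ρ(H) = sup { ρ(L(a)) : a ∈ H }`. -/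
noncomputable def elasticity (M : Type*) [Monoid M] : ℝ≥0∞ :=
  ⨆ a : M, setElasticity (lengths a)

/-- The principal left ideal `Ha`. -/
def leftIdeal {M : Type*} [Monoid M] (a : M) : Set M := Set.range (· * a)

/-- The principal right ideal `aH`. -/
def rightIdeal {M : Type*} [Monoid M] (a : M) : Set M := Set.range (a * ·)

/-- `A` is a generating set of the monoid `M`. -/
def Generates {M : Type*} [Monoid M] (A : Set M) : Prop :=
  ∀ a : M, ∃ l : List M, (∀ x ∈ l, x ∈ A) ∧ l.prod = a

/-- `L` is an almost arithmetical progression (AAP) with difference `d` and bound `M`: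
`L = y + (L₁ ∪ L⋆ ∪ L₂) ⊆ y + dℤ` where `L⋆` is a nonempty (finite or infinite)
arithmetical progression with difference `d` and `min L⋆ = 0`, `L₁ ⊆ [-M, -1]`, and
`L₂ ⊆ sup L⋆ + [1, M]` (with `L₂ = ∅` if `L⋆` is infinite). -/
def IsAAP (d M : ℕ) (L : Set ℤ) : Prop :=
  0 < d ∧
  ∃ (y : ℤ) (L₁ L₂ : Set ℤ),
    L₁ ⊆ Set.Icc (-(M : ℤ)) (-1) ∧
    (∀ x ∈ L, ∃ z : ℤ, x = y + (d : ℤ) * z) ∧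
    ((∃ ℓ : ℕ, L₂ ⊆ Set.Icc ((ℓ : ℤ) * d + 1) ((ℓ : ℤ) * d + M) ∧
        L = (fun x => y + x) '' (L₁ ∪ (fun n : ℕ => (n : ℤ) * d) '' Set.Iic ℓ ∪ L₂)) ∨
      L = (fun x => y + x) '' (L₁ ∪ Set.range fun n : ℕ => (n : ℤ) * d))

section StructureAux

variable {M : Type*} [CancelMonoid M]

private lemma unit_of_mul {a b : M} (h : IsUnit (a * b)) : IsUnit a ∧ IsUnit b := by
  obtain ⟨v, hv⟩ := h
  constructor
  · have h1 : a * (b * (↑v⁻¹ : M)) = 1 := by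
      rw [← mul_assoc, ← hv, Units.mul_inv]
    have h2 : (b * (↑v⁻¹ : M)) * a = 1 := by
      have h3 : a * ((b * (↑v⁻¹ : M)) * a) = a * 1 := by
        rw [← mul_assoc, h1, one_mul, mul_one]
      exact mul_left_cancel h3
    exact ⟨⟨a, _, h1, h2⟩, rfl⟩
  · have h1 : ((↑v⁻¹ : M) * a) * b = 1 := by
      rw [mul_assoc, ← hv, Units.inv_mul]
    have h2 : b * ((↑v⁻¹ : M) * a) = 1 := by
      have h3 : (b * ((↑v⁻¹ : M) * a)) * b = 1 * b := by
        rw [mul_assoc, h1, mul_one, one_mul]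
      exact mul_right_cancel h3
    exact ⟨⟨b, _, h2, h1⟩, rfl⟩

private lemma prod_not_unit : ∀ {l : List M}, (∀ x ∈ l, Irreducible x) → l ≠ [] → ¬ IsUnit l.prod := by
  intro l hl hne hu
  match l, hne with
  | x :: t, _ =>
    rw [List.prod_cons] at hu
    exact (hl x (by simp)).not_isUnit (unit_of_mul hu).1

private lemma mem_lengths_iff {a : M} (ha : ¬ IsUnit a) {k : ℕ} :
    k ∈ lengths a ↔ ∃ l : List M, l.length = k ∧ (∀ x ∈ l, Irreducible x) ∧ l.prod = a := by
  rw [lengths, if_neg ha]; rfl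

private lemma lengths_mul {a b : M} (ha : ¬IsUnit a) (hb : ¬IsUnit b) {x y : ℕ}
    (hx : x ∈ lengths a) (hy : y ∈ lengths b) : x + y ∈ lengths (a * b) := by
  have hab : ¬ IsUnit (a * b) := fun h => ha (unit_of_mul h).1
  obtain ⟨l1, hl1, hi1, hp1⟩ := (mem_lengths_iff ha).mp hx
  obtain ⟨l2, hl2, hi2, hp2⟩ := (mem_lengths_iff hb).mp hy
  refine (mem_lengths_iff hab).mpr ⟨l1 ++ l2, by simp [hl1, hl2], ?_, by
    rw [List.prod_append, hp1, hp2]⟩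
  intro z hz; rcases List.mem_append.mp hz with h | h
  exacts [hi1 z h, hi2 z h]

private lemma zero_not_mem_lengths {a : M} (ha : ¬ IsUnit a) : 0 ∉ lengths a := by
  intro h
  obtain ⟨l, hl, _, hp⟩ := (mem_lengths_iff ha).mp h
  rw [List.length_eq_zero_iff] at hl
  subst hl
  have : a = 1 := by simpa using hp.symm
  exact ha (this ▸ isUnit_one)

private lemma pow_not_unit {a : M} (ha : ¬IsUnit a) {n : ℕ} (hn : 1 ≤ n) : ¬ IsUnit (a ^ n) := by
  intro hun
  cases n with
  | zero => omega
  | succ m => rw [pow_succ] at hun; exact ha (unit_of_mul hun).2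

private lemma U_symm {k x : ℕ} (h : x ∈ lengthUnion M k) : k ∈ lengthUnion M x := by
  obtain ⟨l1, l2, h1, h2, hi1, hi2, hp⟩ := h
  exact ⟨l2, l1, h2, h1, hi2, hi1, hp.symm⟩

private lemma U_add {j k x y : ℕ} (hx : x ∈ lengthUnion M j) (hy : y ∈ lengthUnion M k) :
    x + y ∈ lengthUnion M (j + k) := by
  obtain ⟨a1, a2, ha1, ha2, hi1, hi2, hp⟩ := hx
  obtain ⟨b1, b2, hb1, hb2, hj1, hj2, hq⟩ := hy
  refine ⟨a1 ++ b1, a2 ++ b2, by simp [ha1, hb1], by simp [ha2, hb2], ?_, ?_, by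
    simp [List.prod_append, hp, hq]⟩
  · intro z hz; rcases List.mem_append.mp hz with h | h; exacts [hi1 z h, hj1 z h]
  · intro z hz; rcases List.mem_append.mp hz with h | h; exacts [hi2 z h, hj2 z h]

private lemma U_refl {u : M} (hu : Irreducible u) (k : ℕ) : k ∈ lengthUnion M k := by
  refine ⟨List.replicate k u, List.replicate k u, by simp, by simp, ?_, ?_, rfl⟩ <;>
    · intro z hz; rw [List.eq_of_mem_replicate hz]; exact hu

private lemma U_common {k x : ℕ} (h : x ∈ lengthUnion M k) (hk : 1 ≤ k) :
    ∃ a : M, ¬ IsUnit a ∧ k ∈ lengths a ∧ x ∈ lengths a := by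
  obtain ⟨l1, l2, h1, h2, hi1, hi2, hp⟩ := h
  have hne : l1 ≠ [] := by intro e; rw [e] at h1; simp at h1; omega
  have ha : ¬ IsUnit l1.prod := prod_not_unit hi1 hne
  exact ⟨l1.prod, ha, (mem_lengths_iff ha).mpr ⟨l1, h1, hi1, rfl⟩,
    (mem_lengths_iff ha).mpr ⟨l2, h2, hi2, hp.symm⟩⟩

private lemma lengths_to_U {a : M} (ha : ¬IsUnit a) {k x : ℕ}
    (hk : k ∈ lengths a) (hx : x ∈ lengths a) : x ∈ lengthUnion M k := by
  obtain ⟨l1, h1, hi1, hp1⟩ := (mem_lengths_iff ha).mp hk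
  obtain ⟨l2, h2, hi2, hp2⟩ := (mem_lengths_iff ha).mp hx
  exact ⟨l1, l2, h1, h2, hi1, hi2, by rw [hp1, hp2]⟩

private lemma U_pos {k x : ℕ} (h : x ∈ lengthUnion M k) (hk : 1 ≤ k) : 1 ≤ x := by
  obtain ⟨a, ha, _, hx⟩ := U_common h hk
  rcases Nat.eq_zero_or_pos x with rfl | h1
  · exact absurd hx (zero_not_mem_lengths ha)
  · exact h1

private lemma U_one {x : ℕ} (h : x ∈ lengthUnion M 1) : x = 1 := by
  obtain ⟨l1, l2, h1, h2, hi1, hi2, hp⟩ := h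
  obtain ⟨u, rfl⟩ := List.length_eq_one_iff.mp h1
  have hu : Irreducible u := hi1 u (by simp)
  match l2, h2 with
  | [], h2 =>
    simp at hp
    exact absurd (hp ▸ isUnit_one) hu.not_isUnit
  | [v], h2 => simpa using h2.symm
  | v :: w :: t, h2 =>
    exfalso
    have hp' : u = v * (w :: t).prod := by simpa using hp
    rcases hu.isUnit_or_isUnit hp' with h | h
    · exact (hi2 v (by simp)).not_isUnit h
    · exact prod_not_unit (fun z hz => hi2 z (List.mem_cons_of_mem v hz)) (by simp) h

private lemma exists_irreducible (hne : (DeltaH M).Nonempty) : ∃ u : M, Irreducible u := by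
  obtain ⟨e, he⟩ := hne
  obtain ⟨a, ha⟩ := Set.mem_iUnion.mp he
  obtain ⟨hpos, x, hx, hxe, -⟩ := ha
  have hu : ¬ IsUnit a := by
    intro h
    rw [lengths, if_pos h] at hx hxe
    simp at hx hxe
    omega
  obtain ⟨l, hl, hi, -⟩ := (mem_lengths_iff hu).mp hxe
  match l, hl with
  | u :: t, _ => exact ⟨u, hi u (by simp)⟩
  | [], hl => simp at hl; omega


private lemma gap_lemma {L : Set ℕ} {u v : ℕ} (hu : u ∈ L) (hv : v ∈ L) (huv : u < v) :
    ∃ w ∈ L, u < w ∧ w ≤ v ∧ (w - u) ∈ distances L := by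
  have hS : {z | z ∈ L ∧ u < z ∧ z ≤ v}.Nonempty := ⟨v, hv, huv, le_rfl⟩
  obtain ⟨hwL, hwu, hwv⟩ := Nat.sInf_mem hS
  set w := sInf {z | z ∈ L ∧ u < z ∧ z ≤ v} with hw
  refine ⟨w, hwL, hwu, hwv, ?_, u, hu, ?_, ?_⟩
  · omega
  · rwa [Nat.add_sub_cancel' (Nat.le_of_lt hwu)]
  · intro m hm h1 h2
    rw [Nat.add_sub_cancel' (Nat.le_of_lt hwu)] at h2
    rcases Nat.eq_or_lt_of_le h1 with he | h1'
    · exact Or.inl he.symm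
    · right
      have : w ≤ m := Nat.sInf_le ⟨hm, h1', le_trans h2 hwv⟩
      omega

private lemma distances_sub (a : M) : distances (lengths a) ⊆ DeltaH M :=
  fun e he => Set.mem_iUnion.mpr ⟨a, he⟩

private lemma lengths_pow {a : M} (ha : ¬IsUnit a) {x1 x2 : ℕ}
    (h1 : x1 ∈ lengths a) (h2 : x2 ∈ lengths a) :
    ∀ i j : ℕ, 1 ≤ i + j → i * x1 + j * x2 ∈ lengths (a ^ (i + j)) := by
  intro i
  induction i with
  | zero =>
    intro j hj
    induction j with
    | zero => omega
    | succ m ih =>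
      rcases Nat.eq_zero_or_pos m with rfl | hm
      · simpa using h2
      · have hmem := lengths_mul (pow_not_unit ha hm) ha (by simpa using ih (by omega)) h2
        rw [← pow_succ] at hmem
        have hval : m * x2 + x2 = 0 * x1 + (m + 1) * x2 := by ring
        rw [hval] at hmem
        simpa using hmem
  | succ n ih =>
    intro j hj
    rcases Nat.eq_zero_or_pos (n + j) with h0 | hpos
    · have hn : n = 0 := by omega
      have hj0 : j = 0 := by omega
      subst hn; subst hj0
      simpa using h1
    · have hmem := lengths_mul ha (pow_not_unit ha hpos) h1 (ih j hpos)
      rw [← pow_succ'] at hmem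
      have harr : n + j + 1 = n + 1 + j := by omega
      rw [harr] at hmem
      have hval : x1 + (n * x1 + j * x2) = (n + 1) * x1 + j * x2 := by ring
      rwa [hval] at hmem

private lemma not_unit_of_distances {a : M} {x e : ℕ} (hpos : 0 < e)
    (hx : x ∈ lengths a) (hxe : x + e ∈ lengths a) : ¬ IsUnit a := by
  intro h
  rw [lengths, if_pos h] at hx hxe
  simp at hx hxe
  omega

private lemma sInf_delta_dvd (hne : (DeltaH M).Nonempty) :
    ∀ e ∈ DeltaH M, sInf (DeltaH M) ∣ e := by
  intro e he
  have hdmem : sInf (DeltaH M) ∈ DeltaH M := Nat.sInf_mem hne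
  set d := sInf (DeltaH M) with hd
  have hd0 : 0 < d := by
    obtain ⟨a, ha⟩ := Set.mem_iUnion.mp hdmem; exact ha.1
  have hde : d ≤ e := Nat.sInf_le he
  obtain ⟨a, ha⟩ := Set.mem_iUnion.mp hdmem
  obtain ⟨-, x, hx, hxd, -⟩ := ha
  obtain ⟨b, hb⟩ := Set.mem_iUnion.mp he
  obtain ⟨he0, y, hy, hye, -⟩ := hb
  have hau : ¬ IsUnit a := not_unit_of_distances hd0 hx hxd
  have hbu : ¬ IsUnit b := not_unit_of_distances he0 hy hye
  by_contra hndvd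
  have hq : 1 ≤ e / d := (Nat.one_le_div_iff hd0).mpr hde
  have hr0 : e % d ≠ 0 := fun h => hndvd (Nat.dvd_of_mod_eq_zero h)
  have hrd : e % d < d := Nat.mod_lt _ hd0
  have heqr : d * (e / d) + e % d = e := Nat.div_add_mod e d
  set q := e / d with hqd
  set r := e % d with hrd2
  -- two lengths of c := a^q * b at distance r
  have hanu : ¬ IsUnit (a ^ q) := pow_not_unit hau hq
  have hm1 : q * (x + d) ∈ lengths (a ^ q) := by
    have := lengths_pow hau hx hxd 0 q (by omega)
    simpa using this
  have hm2 : q * x ∈ lengths (a ^ q) := by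
    have := lengths_pow hau hx hxd q 0 (by omega)
    simpa using this
  have hc1 : q * (x + d) + y ∈ lengths (a ^ q * b) := lengths_mul hanu hbu hm1 hy
  have hc2 : q * x + (y + e) ∈ lengths (a ^ q * b) := lengths_mul hanu hbu hm2 hye
  have he1 : q * (x + d) + y = (q * x + d * q) + y := by ring
  have he2 : q * x + (y + e) = ((q * x + d * q) + y) + r := by rw [← heqr]; ring
  rw [he1] at hc1
  rw [he2] at hc2
  obtain ⟨w, hwmem, hw1, hw2, hwdist⟩ := gap_lemma hc1 hc2 (by omega)
  have hwD : w - (q * x + d * q + y) ∈ DeltaH M := distances_sub _ hwdist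
  have := Nat.sInf_le hwD
  omega

private lemma lengths_modeq (hne : (DeltaH M).Nonempty) {a : M} :
    ∀ n : ℕ, ∀ u v : ℕ, u ∈ lengths a → v ∈ lengths a → u ≤ v → v - u ≤ n →
      sInf (DeltaH M) ∣ v - u := by
  intro n
  induction n with
  | zero =>
    intro u v _ _ h1 h2
    have : v - u = 0 := by omega
    simp [this]
  | succ n ih =>
    intro u v hu hv h1 h2
    rcases Nat.eq_or_lt_of_le h1 with rfl | hlt
    · simp
    · obtain ⟨w, hw, hw1, hw2, hwd⟩ := gap_lemma hu hv hlt
      have hd1 : sInf (DeltaH M) ∣ w - u := sInf_delta_dvd hne _ (distances_sub a hwd)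
      have hd2 : sInf (DeltaH M) ∣ v - w := ih w v hw hv (by omega) (by omega)
      obtain ⟨c1, e1⟩ := hd1; obtain ⟨c2, e2⟩ := hd2
      exact ⟨c1 + c2, by rw [Nat.mul_add, ← e1, ← e2]; omega⟩

private lemma U_modeq (hne : (DeltaH M).Nonempty) {k x : ℕ}
    (h : x ∈ lengthUnion M k) (hk : 1 ≤ k) :
    x ≡ k [MOD sInf (DeltaH M)] := by
  obtain ⟨a, ha, hkl, hxl⟩ := U_common h hk
  rcases le_total x k with h1 | h1
  · exact (Nat.modEq_iff_dvd' h1).mpr (lengths_modeq hne (k - x) x k hxl hkl h1 le_rfl)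
  · exact ((Nat.modEq_iff_dvd' h1).mpr (lengths_modeq hne (x - k) k x hkl hxl h1 le_rfl)).symm

private lemma AP_lemma {d y0 : ℕ} {b : M} (hb : ¬IsUnit b)
    (hy0 : y0 ∈ lengths b) (hy0d : y0 + d ∈ lengths b)
    (hu : ∃ u : M, Irreducible u) (hy01 : 1 ≤ y0) :
    ∀ k j : ℕ, j ≤ k / y0 → k + d * j ∈ lengthUnion M k := by
  intro k j hj
  obtain ⟨u, hu⟩ := hu
  have hj' : j ≤ k / y0 := hj
  obtain ⟨m, r, hk_eq, hjm⟩ : ∃ m r, k = m * y0 + r ∧ j ≤ m :=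
    ⟨k / y0, k % y0, by rw [mul_comm]; exact (Nat.div_add_mod k y0).symm, hj⟩
  clear hj hj'
  subst hk_eq
  rcases Nat.eq_zero_or_pos m with rfl | hm
  · have : j = 0 := by omega
    subst this
    simpa using U_refl hu (0 * y0 + r)
  · obtain ⟨p, rfl⟩ : ∃ p, m = p + j := ⟨m - j, by omega⟩
    have hmem := lengths_pow hb hy0 hy0d p j (by omega)
    have hbm : ¬ IsUnit (b ^ (p + j)) := pow_not_unit hb (by omega)
    have hbase : (p + j) * y0 ∈ lengths (b ^ (p + j)) := by
      have := lengths_pow hb hy0 hy0d (p + j) 0 (by omega)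
      simpa using this
    have hUmem : (p + j) * y0 + d * j ∈ lengthUnion M ((p + j) * y0) := by
      have h2 := lengths_to_U hbm hbase hmem
      have hval : p * y0 + j * (y0 + d) = (p + j) * y0 + d * j := by ring
      rwa [hval] at h2
    have hsum := U_add hUmem (U_refl hu r)
    have hval2 : (p + j) * y0 + d * j + r = (p + j) * y0 + r + d * j := by ring
    rwa [hval2] at hsum

private lemma dense_lemma {Dmax : ℕ} (hDmax : ∀ e ∈ DeltaH M, e ≤ Dmax) {a : M} :
    ∀ n u v T : ℕ, u ∈ lengths a → v ∈ lengths a → u ≤ T → T ≤ v → v - u ≤ n →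
      ∃ w ∈ lengths a, T ≤ w ∧ w ≤ T + Dmax := by
  intro n
  induction n with
  | zero =>
    intro u v T hu hv h1 h2 h3
    exact ⟨u, hu, by omega, by omega⟩
  | succ n ih =>
    intro u v T hu hv h1 h2 h3
    rcases Nat.eq_or_lt_of_le h1 with rfl | hlt
    · exact ⟨u, hu, le_rfl, by omega⟩
    · obtain ⟨w, hw, hw1, hw2, hwd⟩ := gap_lemma hu hv (by omega)
      have hwb : w - u ≤ Dmax := hDmax _ (distances_sub a hwd)
      rcases le_or_gt T w with hc | hc
      · exact ⟨w, hw, hc, by omega⟩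
      · exact ih w v T hw hv (le_of_lt hc) h2 (by omega)

private lemma U_dense (hne : (DeltaH M).Nonempty) {Dmax : ℕ}
    (hDmax : ∀ e ∈ DeltaH M, e ≤ Dmax) {k x T : ℕ} (h : x ∈ lengthUnion M k)
    (hk : 1 ≤ k) (h1 : k ≤ T) (h2 : T ≤ x) :
    ∃ w ∈ lengthUnion M k, T ≤ w ∧ w ≤ T + Dmax := by
  obtain ⟨a, ha, hkl, hxl⟩ := U_common h hk
  obtain ⟨w, hw, hw1, hw2⟩ := dense_lemma hDmax (x - k) k x T hkl hxl h1 h2 le_rfl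
  exact ⟨w, lengths_to_U ha hkl hw, hw1, hw2⟩

private lemma bddAbove_of_rhoK {k : ℕ} (h : rhoK M k ≠ ⊤) : BddAbove (lengthUnion M k) := by
  obtain ⟨n, hn⟩ := ENNReal.exists_nat_gt h.lt_top.ne
  refine ⟨n, fun x hx => ?_⟩
  by_contra hgt
  push_neg at hgt
  have hle : (x : ℝ≥0∞) ≤ rhoK M k := by
    rw [rhoK]; exact le_biSup (fun ℓ : ℕ => (ℓ : ℝ≥0∞)) hx
  have hlt : (x : ℝ≥0∞) < n := lt_of_le_of_lt hle hn
  have : x < n := by exact_mod_cast hlt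
  omega

private lemma rhoK_eq_max {k : ℕ} (hk : (lengthUnion M k).Nonempty)
    (hb : BddAbove (lengthUnion M k)) :
    rhoK M k = ((sSup (lengthUnion M k) : ℕ) : ℝ≥0∞) := by
  rw [rhoK]
  apply le_antisymm
  · exact iSup₂_le fun ℓ hl => Nat.cast_le.mpr (le_csSup hb hl)
  · exact le_biSup (fun ℓ : ℕ => (ℓ : ℝ≥0∞)) (Nat.sSup_mem hk hb)

private lemma unbounded_of_rhoK_top {k : ℕ} (h : rhoK M k = ⊤) :
    ∀ n : ℕ, ∃ L ∈ lengthUnion M k, n ≤ L := by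
  intro n
  by_contra hc
  push_neg at hc
  have hle : rhoK M k ≤ (n : ℝ≥0∞) := iSup₂_le fun ℓ hl => by
    exact_mod_cast Nat.cast_le.mpr (hc ℓ hl).le
  rw [h] at hle
  exact (ENNReal.natCast_ne_top n) (top_le_iff.mp hle)


private lemma mk_aap_fin (d Mstar y z : ℕ) (S : Set ℕ) (hd : 0 < d)
    (hyz : y ≤ z) (hdz : d ∣ z - y)
    (hmod : ∀ u ∈ S, u ≡ y [MOD d])
    (hfr1 : ∀ u ∈ S, u < y → y ≤ u + Mstar)
    (hfr2 : ∀ u ∈ S, z < u → u ≤ z + Mstar)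
    (hfull : ∀ n : ℕ, y + d * n ≤ z → y + d * n ∈ S) :
    IsAAP d Mstar ((Nat.cast : ℕ → ℤ) '' S) := by
  obtain ⟨c, hc⟩ := hdz
  have hzc : z = y + d * c := by
    have h1 : z = d * c + y := (Nat.sub_eq_iff_eq_add hyz).mp hc
    rw [h1, Nat.add_comm]
  have hzcZ : (z : ℤ) = (y : ℤ) + (d : ℤ) * (c : ℤ) := by exact_mod_cast hzc
  refine ⟨hd, (y : ℤ), {w : ℤ | ∃ u ∈ S, u < y ∧ w = (u : ℤ) - (y : ℤ)},
    {w : ℤ | ∃ u ∈ S, z < u ∧ w = (u : ℤ) - (y : ℤ)}, ?_, ?_, Or.inl ⟨c, ?_, ?_⟩⟩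
  · rintro w ⟨u, hu, hlt, rfl⟩
    have h1 := hfr1 u hu hlt
    simp only [Set.mem_Icc]
    omega
  · rintro w ⟨u, hu, rfl⟩
    obtain ⟨t, ht⟩ := (hmod u hu).dvd
    exact ⟨-t, by push_cast; linear_combination -ht⟩
  · rintro w ⟨u, hu, hgt, rfl⟩
    have h2 := hfr2 u hu hgt
    have hgt' : (z : ℤ) < (u : ℤ) := by exact_mod_cast hgt
    have h2' : (u : ℤ) ≤ (z : ℤ) + (Mstar : ℤ) := by exact_mod_cast h2
    simp only [Set.mem_Icc]
    constructor
    · linarith [hzcZ]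
    · linarith [hzcZ]
  · ext w
    simp only [Set.mem_image, Set.mem_union, Set.mem_setOf_eq, Set.mem_Iic]
    constructor
    · rintro ⟨u, hu, rfl⟩
      rcases lt_or_ge u y with hlt | hge
      · exact ⟨(u : ℤ) - y, Or.inl (Or.inl ⟨u, hu, hlt, rfl⟩), by ring⟩
      rcases le_or_gt u z with hle | hgt
      · have hdvd : d ∣ u - y := (Nat.modEq_iff_dvd' hge).mp (hmod u hu).symm
        obtain ⟨n, hn⟩ := hdvd
        have hun : u = d * n + y := (Nat.sub_eq_iff_eq_add hge).mp hn
        have hnc : n ≤ c := by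
          have h3 : d * n ≤ d * c := by
            have h4 : d * n + y ≤ y + d * c := by rw [← hun, ← hzc]; exact hle
            omega
          exact Nat.le_of_mul_le_mul_left h3 hd
        refine ⟨(n : ℤ) * d, Or.inl (Or.inr ⟨n, hnc, rfl⟩), ?_⟩
        have h5 : (u : ℤ) = (d : ℤ) * n + y := by exact_mod_cast hun
        linarith [h5]
      · exact ⟨(u : ℤ) - y, Or.inr ⟨u, hu, hgt, rfl⟩, by ring⟩
    · rintro ⟨w', hw', rfl⟩
      rcases hw' with (⟨u, hu, hlt, rfl⟩ | ⟨n, hn, rfl⟩) | ⟨u, hu, hgt, rfl⟩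
      · exact ⟨u, hu, by ring⟩
      · refine ⟨y + d * n, hfull n ?_, ?_⟩
        · have h6 : d * n ≤ d * c := Nat.mul_le_mul_left d hn
          omega
        · push_cast; ring
      · exact ⟨u, hu, by ring⟩

private lemma mk_aap_inf (d Mstar y : ℕ) (S : Set ℕ) (hd : 0 < d)
    (hmod : ∀ u ∈ S, u ≡ y [MOD d])
    (hfr1 : ∀ u ∈ S, u < y → y ≤ u + Mstar)
    (hfull : ∀ n : ℕ, y + d * n ∈ S) :
    IsAAP d Mstar ((Nat.cast : ℕ → ℤ) '' S) := by
  refine ⟨hd, (y : ℤ), {w : ℤ | ∃ u ∈ S, u < y ∧ w = (u : ℤ) - (y : ℤ)}, ∅, ?_, ?_, Or.inr ?_⟩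
  · rintro w ⟨u, hu, hlt, rfl⟩
    have h1 := hfr1 u hu hlt
    simp only [Set.mem_Icc]
    omega
  · rintro w ⟨u, hu, rfl⟩
    obtain ⟨t, ht⟩ := (hmod u hu).dvd
    exact ⟨-t, by push_cast; linear_combination -ht⟩
  · ext w
    simp only [Set.mem_image, Set.mem_union, Set.mem_setOf_eq, Set.mem_range]
    constructor
    · rintro ⟨u, hu, rfl⟩
      rcases lt_or_ge u y with hlt | hge
      · exact ⟨(u : ℤ) - y, Or.inl ⟨u, hu, hlt, rfl⟩, by ring⟩
      · have hdvd : d ∣ u - y := (Nat.modEq_iff_dvd' hge).mp (hmod u hu).symm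
        obtain ⟨n, hn⟩ := hdvd
        have hun : u = d * n + y := (Nat.sub_eq_iff_eq_add hge).mp hn
        refine ⟨(n : ℤ) * d, Or.inr ⟨n, rfl⟩, ?_⟩
        have h5 : (u : ℤ) = (d : ℤ) * n + y := by exact_mod_cast hun
        linarith [h5]
    · rintro ⟨w', hw', rfl⟩
      rcases hw' with ⟨u, hu, hlt, rfl⟩ | ⟨n, rfl⟩
      · exact ⟨u, hu, by ring⟩
      · exact ⟨y + d * n, hfull n, by push_cast; ring⟩


private lemma coverageA_upper (d y0 k1 Dmax : ℕ) (hd0 : 0 < d) (hy0pos : 1 ≤ y0) (hk1 : 1 ≤ k1)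
    (hmodq : ∀ {k x : ℕ}, x ∈ lengthUnion M k → 1 ≤ k → x ≡ k [MOD d])
    (hAP : ∀ k j : ℕ, j ≤ k / y0 → k + d * j ∈ lengthUnion M k)
    (hunb : ∀ n : ℕ, ∃ L ∈ lengthUnion M k1, n ≤ L)
    (hdense : ∀ {k x T : ℕ}, x ∈ lengthUnion M k → 1 ≤ k → k ≤ T → T ≤ x →
      ∃ w ∈ lengthUnion M k, T ≤ w ∧ w ≤ T + Dmax) :
    ∀ k x : ℕ, k1 + y0 * (Dmax + 1) ≤ k → k ≤ x → x ≡ k [MOD d] →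
      x ∈ lengthUnion M k := by
  intro k x hkA hkx hmod
  obtain ⟨K, hK⟩ : ∃ K, k = k1 + K := ⟨k - k1, by omega⟩
  have hKge : y0 * (Dmax + 1) ≤ K := by omega
  have hmdiv : Dmax + 1 ≤ K / y0 := (Nat.le_div_iff_mul_le (by omega)).mpr
    (by calc (Dmax + 1) * y0 = y0 * (Dmax + 1) := Nat.mul_comm _ _
          _ ≤ K := hKge)
  obtain ⟨m, r, hmr, hrlt, hm⟩ : ∃ m r, K = m * y0 + r ∧ r < y0 ∧ Dmax + 1 ≤ m :=
    ⟨K / y0, K % y0, by rw [Nat.mul_comm]; exact (Nat.div_add_mod K y0).symm,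
      Nat.mod_lt _ (by omega), hmdiv⟩
  have hmfloor : m ≤ (m * y0 + r) / y0 :=
    (Nat.le_div_iff_mul_le (show 0 < y0 by omega)).mpr (Nat.le_add_right _ _)
  have hdvd : d ∣ x - k := (Nat.modEq_iff_dvd' hkx).mp hmod.symm
  obtain ⟨t, ht⟩ := hdvd
  have hxt : x = d * t + k := (Nat.sub_eq_iff_eq_add hkx).mp ht
  by_cases hcase : t ≤ m
  · have hky : m * y0 ≤ k := le_trans (hmr ▸ Nat.le_add_right _ _) (hK ▸ Nat.le_add_left _ _)
    have htk : t ≤ k / y0 := le_trans hcase ((Nat.le_div_iff_mul_le (by omega)).mpr hky)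
    have hAPk := hAP k t htk
    have hval : k + d * t = x := by rw [hxt]; exact Nat.add_comm _ _
    rwa [hval] at hAPk
  · push_neg at hcase
    obtain ⟨tm, htm⟩ : ∃ tm, t = tm + m := ⟨t - m, by omega⟩
    obtain ⟨Lb, hLb, hLbge⟩ := hunb (k1 + d * tm + Dmax)
    obtain ⟨w, hw, hw1, hw2⟩ := hdense hLb hk1 (Nat.le_add_right _ _)
      (le_trans (Nat.le_add_right _ _) hLbge)
    have hwmod : w ≡ k1 [MOD d] := hmodq hw hk1
    have hTmod : (k1 + d * tm) ≡ k1 [MOD d] := Nat.add_mul_mod_self_left k1 d tm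
    have hdvd2 : d ∣ w - (k1 + d * tm) := (Nat.modEq_iff_dvd' hw1).mp (hTmod.trans hwmod.symm)
    obtain ⟨s, hs⟩ := hdvd2
    have hws : w = d * s + (k1 + d * tm) := (Nat.sub_eq_iff_eq_add hw1).mp hs
    have hsle : s ≤ d * s := Nat.le_mul_of_pos_left s hd0
    have hDSb : d * s ≤ Dmax := by
      have h8 : d * s + (k1 + d * tm) ≤ (k1 + d * tm) + Dmax := by rw [← hws]; exact hw2
      rw [Nat.add_comm (d * s)] at h8
      exact Nat.add_le_add_iff_left.mp h8
    have hsm : s ≤ m := le_trans (le_trans hsle hDSb) (by omega)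
    obtain ⟨j, hjs⟩ : ∃ j, m = j + s := ⟨m - s, by omega⟩
    have hAPm := hAP (m * y0 + r) j (le_trans (by omega) hmfloor)
    have hfin := U_add hw hAPm
    have hidx : k1 + (m * y0 + r) = k := by rw [hK, hmr]
    rw [hidx] at hfin
    have hval : w + (m * y0 + r + d * j) = x := by
      rw [hws, hxt, hK, hmr, htm, hjs]; ring
    rwa [hval] at hfin

private lemma coverageA_full (d y0 k1 Dmax : ℕ) (hd0 : 0 < d) (hy0pos : 1 ≤ y0) (hk1 : 1 ≤ k1)
    (hmodq : ∀ {k x : ℕ}, x ∈ lengthUnion M k → 1 ≤ k → x ≡ k [MOD d])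
    (hAP : ∀ k j : ℕ, j ≤ k / y0 → k + d * j ∈ lengthUnion M k)
    (hunb : ∀ n : ℕ, ∃ L ∈ lengthUnion M k1, n ≤ L)
    (hdense : ∀ {k x T : ℕ}, x ∈ lengthUnion M k → 1 ≤ k → k ≤ T → T ≤ x →
      ∃ w ∈ lengthUnion M k, T ≤ w ∧ w ≤ T + Dmax)
    (hrefl : ∀ k : ℕ, k ∈ lengthUnion M k) :
    ∀ k x : ℕ, k1 + y0 * (Dmax + 1) ≤ k → x ≡ k [MOD d] →
      sInf (lengthUnion M k) + (k1 + y0 * (Dmax + 1) + 1) ≤ x → x ∈ lengthUnion M k := by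
  intro k x hkA hmod hxl
  have hlam : sInf (lengthUnion M k) ∈ lengthUnion M k := Nat.sInf_mem ⟨k, hrefl k⟩
  have hlam1 : 1 ≤ sInf (lengthUnion M k) := U_pos hlam (by omega)
  rcases le_or_gt k x with hkx | hxk
  · exact coverageA_upper d y0 k1 Dmax hd0 hy0pos hk1 @hmodq hAP hunb @hdense k x hkA hkx hmod
  · have hx1 : k1 + y0 * (Dmax + 1) ≤ x := by omega
    exact U_symm (coverageA_upper d y0 k1 Dmax hd0 hy0pos hk1 @hmodq hAP hunb @hdense
      x k hx1 (le_of_lt hxk) hmod.symm)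

private lemma aapA (d y0 k1 Dmax : ℕ) (hd0 : 0 < d) (hy0pos : 1 ≤ y0) (hk1 : 1 ≤ k1)
    (hmodq : ∀ {k x : ℕ}, x ∈ lengthUnion M k → 1 ≤ k → x ≡ k [MOD d])
    (hAP : ∀ k j : ℕ, j ≤ k / y0 → k + d * j ∈ lengthUnion M k)
    (hunb : ∀ n : ℕ, ∃ L ∈ lengthUnion M k1, n ≤ L)
    (hdense : ∀ {k x T : ℕ}, x ∈ lengthUnion M k → 1 ≤ k → k ≤ T → T ≤ x →
      ∃ w ∈ lengthUnion M k, T ≤ w ∧ w ≤ T + Dmax)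
    (hrefl : ∀ k : ℕ, k ∈ lengthUnion M k) :
    ∀ k : ℕ, k1 + y0 * (Dmax + 1) ≤ k →
      IsAAP d (k1 + y0 * (Dmax + 1) + d + 2) ((Nat.cast : ℕ → ℤ) '' lengthUnion M k) := by
  intro k hk
  set kA := k1 + y0 * (Dmax + 1) with hkA
  set lam := sInf (lengthUnion M k) with hlamd
  have hlam : lam ∈ lengthUnion M k := Nat.sInf_mem ⟨k, hrefl k⟩
  have hk1' : 1 ≤ k := by omega
  obtain ⟨Q, rem, hQ, hrem⟩ : ∃ Q rem, kA + 1 = d * Q + rem ∧ rem < d :=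
    ⟨(kA + 1) / d, (kA + 1) % d, (Nat.div_add_mod _ d).symm, Nat.mod_lt _ hd0⟩
  have hQle : d * Q ≤ kA + 1 := Nat.le.intro hQ.symm
  have hymod : (lam + d * (Q + 1)) ≡ lam [MOD d] := Nat.add_mul_mod_self_left lam d (Q + 1)
  have hyge : lam + (kA + 1) ≤ lam + d * (Q + 1) := by
    have h1 : d * (Q + 1) = d * Q + d := by ring
    omega
  apply mk_aap_inf d _ (lam + d * (Q + 1)) _ hd0
  · intro u hu
    exact ((hmodq hu hk1').trans (hmodq hlam hk1').symm).trans hymod.symm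
  · intro u hu hult
    have h1 : lam ≤ u := Nat.sInf_le hu
    have h2 : d * (Q + 1) = d * Q + d := by ring
    have h3 : lam + d * (Q + 1) = lam + (d * Q + d) := by rw [h2]
    rw [h3]
    omega
  · intro n
    apply coverageA_full d y0 k1 Dmax hd0 hy0pos hk1 @hmodq hAP hunb @hdense hrefl k _ hk
    · exact (Nat.add_mul_mod_self_left (lam + d * (Q + 1)) d n).trans (hymod.trans (hmodq hlam hk1'))
    · omega


private lemma Rtele (Mb : ℕ)
    (hRle : ∀ k : ℕ, 2 ≤ k → sSup (lengthUnion M k) ≤ sSup (lengthUnion M (k - 1)) + Mb) :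
    ∀ h j : ℕ, 1 ≤ j → sSup (lengthUnion M (j + h)) ≤ sSup (lengthUnion M j) + h * Mb := by
  intro h
  induction h with
  | zero => intro j hj; simp
  | succ n ihn =>
    intro j hj
    have h1 : sSup (lengthUnion M (j + n + 1)) ≤ sSup (lengthUnion M (j + n)) + Mb := by
      have h2 := hRle (j + n + 1) (by omega)
      simpa using h2
    calc sSup (lengthUnion M (j + (n + 1))) = sSup (lengthUnion M (j + n + 1)) := rfl
      _ ≤ sSup (lengthUnion M (j + n)) + Mb := h1
      _ ≤ (sSup (lengthUnion M j) + n * Mb) + Mb := Nat.add_le_add_right (ihn j hj) Mb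
      _ = sSup (lengthUnion M j) + (n + 1) * Mb := by ring

private lemma Rge (hbdd : ∀ k : ℕ, 1 ≤ k → BddAbove (lengthUnion M k))
    (hrefl : ∀ k : ℕ, k ∈ lengthUnion M k) :
    ∀ h j : ℕ, 1 ≤ j → sSup (lengthUnion M j) + h ≤ sSup (lengthUnion M (j + h)) := by
  intro h
  induction h with
  | zero => intro j hj; simp
  | succ n ihn =>
    intro j hj
    have h1 : sSup (lengthUnion M (j + n)) + 1 ∈ lengthUnion M (j + n + 1) :=
      U_add (Nat.sSup_mem ⟨j + n, hrefl _⟩ (hbdd _ (by omega))) (hrefl 1)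
    have h2 : sSup (lengthUnion M (j + n)) + 1 ≤ sSup (lengthUnion M (j + n + 1)) :=
      le_csSup (hbdd _ (by omega)) h1
    have h3 := ihn j hj
    calc sSup (lengthUnion M j) + (n + 1) = (sSup (lengthUnion M j) + n) + 1 := rfl
      _ ≤ sSup (lengthUnion M (j + n)) + 1 := Nat.add_le_add_right h3 1
      _ ≤ sSup (lengthUnion M (j + n + 1)) := h2

private lemma coverageB_upper (d y0 Mb h0 MB : ℕ) (hd0 : 0 < d) (hy0pos : 1 ≤ y0)
    (hmodq : ∀ {k x : ℕ}, x ∈ lengthUnion M k → 1 ≤ k → x ≡ k [MOD d])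
    (hAP : ∀ k j : ℕ, j ≤ k / y0 → k + d * j ∈ lengthUnion M k)
    (hrefl : ∀ k : ℕ, k ∈ lengthUnion M k)
    (hbdd : ∀ k : ℕ, 1 ≤ k → BddAbove (lengthUnion M k))
    (hRle : ∀ k : ℕ, 2 ≤ k → sSup (lengthUnion M k) ≤ sSup (lengthUnion M (k - 1)) + Mb)
    (hR1 : sSup (lengthUnion M 1) = 1)
    (hh0 : h0 = y0 * (Mb + 2)) (hMB : MB = h0 * Mb + Mb + 1) :
    ∀ k x : ℕ, h0 + 1 ≤ k → k ≤ x → x + MB ≤ sSup (lengthUnion M k) →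
      x ≡ k [MOD d] → x ∈ lengthUnion M k := by
  intro k x hk hkx hxR hmod
  have hRmem : ∀ j : ℕ, 1 ≤ j → sSup (lengthUnion M j) ∈ lengthUnion M j :=
    fun j hj => Nat.sSup_mem ⟨j, hrefl j⟩ (hbdd j hj)
  have hne1 : (k - 1) ∈ {h : ℕ | h ≤ k - 1 ∧ sSup (lengthUnion M (k - h)) + h ≤ x} := by
    refine ⟨le_rfl, ?_⟩
    have he : k - (k - 1) = 1 := by omega
    rw [he, hR1]
    omega
  set hst := sInf {h : ℕ | h ≤ k - 1 ∧ sSup (lengthUnion M (k - h)) + h ≤ x} with hstdef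
  obtain ⟨hh1, hh2⟩ : hst ≤ k - 1 ∧ sSup (lengthUnion M (k - hst)) + hst ≤ x :=
    Nat.sInf_mem ⟨k - 1, hne1⟩
  have hlowb : ∀ h : ℕ, h ≤ h0 → h ≤ k - 1 → x < sSup (lengthUnion M (k - h)) + h := by
    intro h hhh hhk
    have h1 : sSup (lengthUnion M k) ≤ sSup (lengthUnion M (k - h)) + h * Mb := by
      have h2 := Rtele Mb hRle h (k - h) (by omega)
      have he : k - h + h = k := by omega
      rwa [he] at h2
    have h2 : h * Mb ≤ h0 * Mb := Nat.mul_le_mul_right Mb hhh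
    omega
  have hsth0 : h0 + 1 ≤ hst := by
    by_contra hc
    push_neg at hc
    have := hlowb hst (by omega) hh1
    omega
  have hprev : hst - 1 ∉ {h : ℕ | h ≤ k - 1 ∧ sSup (lengthUnion M (k - h)) + h ≤ x} :=
    Nat.notMem_of_lt_sInf (by omega)
  have hgprev : x < sSup (lengthUnion M (k - (hst - 1))) + (hst - 1) := by
    rcases le_or_gt (sSup (lengthUnion M (k - (hst - 1))) + (hst - 1)) x with hc | hc
    · exact absurd ⟨by omega, hc⟩ hprev
    · exact hc
  have hidx : k - (hst - 1) = k - hst + 1 := by omega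
  rw [hidx] at hgprev
  have hstep : sSup (lengthUnion M (k - hst + 1)) ≤ sSup (lengthUnion M (k - hst)) + Mb := by
    have h2 := hRle (k - hst + 1) (by omega)
    simpa using h2
  have hgap : x < sSup (lengthUnion M (k - hst)) + hst + Mb := by omega
  have hmod2 : sSup (lengthUnion M (k - hst)) + hst ≡ k [MOD d] := by
    have h3 := hmodq (hRmem (k - hst) (by omega)) (by omega)
    have h4 := Nat.ModEq.add_right hst h3
    have h5 : k - hst + hst = k := by omega
    rwa [h5] at h4
  have hdvd : d ∣ x - (sSup (lengthUnion M (k - hst)) + hst) :=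
    (Nat.modEq_iff_dvd' hh2).mp (hmod2.trans hmod.symm)
  obtain ⟨j, hj⟩ := hdvd
  have hxj : x = d * j + (sSup (lengthUnion M (k - hst)) + hst) :=
    (Nat.sub_eq_iff_eq_add hh2).mp hj
  have hjle : j ≤ d * j := Nat.le_mul_of_pos_left j hd0
  have hdivb : Mb + 2 ≤ hst / y0 := (Nat.le_div_iff_mul_le (by omega)).mpr
    (by calc (Mb + 2) * y0 = y0 * (Mb + 2) := Nat.mul_comm _ _
          _ ≤ hst := by omega)
  have hAPm := hAP hst j (by omega)
  have hfin := U_add (hRmem (k - hst) (by omega)) hAPm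
  have hidx2 : k - hst + hst = k := by omega
  rw [hidx2] at hfin
  have hval : sSup (lengthUnion M (k - hst)) + (hst + d * j) = x := by omega
  rwa [hval] at hfin

private lemma coverageB (d y0 Mb h0 MB M2 : ℕ) (hd0 : 0 < d) (hy0pos : 1 ≤ y0)
    (hmodq : ∀ {k x : ℕ}, x ∈ lengthUnion M k → 1 ≤ k → x ≡ k [MOD d])
    (hAP : ∀ k j : ℕ, j ≤ k / y0 → k + d * j ∈ lengthUnion M k)
    (hrefl : ∀ k : ℕ, k ∈ lengthUnion M k)
    (hbdd : ∀ k : ℕ, 1 ≤ k → BddAbove (lengthUnion M k))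
    (hRle : ∀ k : ℕ, 2 ≤ k → sSup (lengthUnion M k) ≤ sSup (lengthUnion M (k - 1)) + Mb)
    (hR1 : sSup (lengthUnion M 1) = 1)
    (hh0 : h0 = y0 * (Mb + 2)) (hMB : MB = h0 * Mb + Mb + 1) (hM2 : M2 = MB + h0 + 1) :
    ∀ k x : ℕ, 1 ≤ k → sInf (lengthUnion M k) + M2 ≤ x →
      x + M2 ≤ sSup (lengthUnion M k) → x ≡ k [MOD d] → x ∈ lengthUnion M k := by
  intro k x hk hxl hxu hmod
  have hlam : sInf (lengthUnion M k) ∈ lengthUnion M k := Nat.sInf_mem ⟨k, hrefl k⟩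
  have hlam1 : 1 ≤ sInf (lengthUnion M k) := U_pos hlam hk
  rcases le_or_gt k x with hkx | hxk
  · have htele2 : sSup (lengthUnion M k) ≤ sSup (lengthUnion M 1) + (k - 1) * Mb := by
      have h2 := Rtele Mb hRle (k - 1) 1 le_rfl
      have he : 1 + (k - 1) = k := by omega
      rwa [he] at h2
    rw [hR1] at htele2
    have hlt : h0 * Mb < (k - 1) * Mb := by omega
    have hk0 : h0 < k - 1 := lt_of_mul_lt_mul_right hlt (Nat.zero_le Mb)
    exact coverageB_upper d y0 Mb h0 MB hd0 hy0pos @hmodq hAP hrefl hbdd hRle hR1 hh0 hMB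
      k x (by omega) hkx (by omega) hmod
  · have hx0 : h0 + 1 ≤ x := by omega
    have hkmem : k ∈ lengthUnion M (sInf (lengthUnion M k)) := U_symm hlam
    have hRlam : k ≤ sSup (lengthUnion M (sInf (lengthUnion M k))) :=
      le_csSup (hbdd _ hlam1) hkmem
    obtain ⟨e, he⟩ : ∃ e, x = sInf (lengthUnion M k) + e := ⟨x - sInf (lengthUnion M k), by omega⟩
    have hRge := Rge hbdd hrefl e (sInf (lengthUnion M k)) hlam1
    rw [← he] at hRge
    apply U_symm
    exact coverageB_upper d y0 Mb h0 MB hd0 hy0pos @hmodq hAP hrefl hbdd hRle hR1 hh0 hMB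
      x k hx0 (le_of_lt hxk) (by omega) hmod.symm

private lemma aapB (d y0 Mb h0 MB M2 Mstar : ℕ) (hd0 : 0 < d) (hy0pos : 1 ≤ y0)
    (hmodq : ∀ {k x : ℕ}, x ∈ lengthUnion M k → 1 ≤ k → x ≡ k [MOD d])
    (hAP : ∀ k j : ℕ, j ≤ k / y0 → k + d * j ∈ lengthUnion M k)
    (hrefl : ∀ k : ℕ, k ∈ lengthUnion M k)
    (hbdd : ∀ k : ℕ, 1 ≤ k → BddAbove (lengthUnion M k))
    (hRle : ∀ k : ℕ, 2 ≤ k → sSup (lengthUnion M k) ≤ sSup (lengthUnion M (k - 1)) + Mb)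
    (hR1 : sSup (lengthUnion M 1) = 1)
    (hh0 : h0 = y0 * (Mb + 2)) (hMB : MB = h0 * Mb + Mb + 1) (hM2 : M2 = MB + h0 + 1)
    (hMstar : Mstar = 2 * M2 + 2 * d + 2) :
    ∀ k : ℕ, 1 ≤ k → IsAAP d Mstar ((Nat.cast : ℕ → ℤ) '' lengthUnion M k) := by
  intro k hk
  have hlam : sInf (lengthUnion M k) ∈ lengthUnion M k := Nat.sInf_mem ⟨k, hrefl k⟩
  have hlam1 : 1 ≤ sInf (lengthUnion M k) := U_pos hlam hk
  have hmodlam : sInf (lengthUnion M k) ≡ k [MOD d] := hmodq hlam hk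
  set lam := sInf (lengthUnion M k) with hlamdef
  by_cases hsmall : sSup (lengthUnion M k) ≤ lam + 2 * M2 + 2 * d + 1
  · apply mk_aap_fin d Mstar lam lam _ hd0 le_rfl (by simp)
    · intro u hu
      exact (hmodq hu hk).trans hmodlam.symm
    · intro u hu hlt
      exact absurd (Nat.sInf_le hu) (by omega)
    · intro u hu hgt
      have h1 := le_csSup (hbdd k hk) hu
      omega
    · intro n hn
      have hn0 : d * n = 0 := by omega
      have h1 : lam + d * n = lam := by omega
      rw [h1]
      exact hlam
  · push_neg at hsmall
    obtain ⟨Q, rem, hQ, hrem⟩ : ∃ Q rem, M2 = d * Q + rem ∧ rem < d :=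
      ⟨M2 / d, M2 % d, (Nat.div_add_mod _ d).symm, Nat.mod_lt _ hd0⟩
    have hdQ : d * (Q + 1) = d * Q + d := by ring
    have hymod : (lam + d * (Q + 1)) ≡ lam [MOD d] := Nat.add_mul_mod_self_left lam d (Q + 1)
    have hyl : lam + M2 ≤ lam + d * (Q + 1) ∧ lam + d * (Q + 1) ≤ lam + M2 + d := by omega
    obtain ⟨T, hT⟩ : ∃ T, sSup (lengthUnion M k) = T + M2 := ⟨sSup (lengthUnion M k) - M2, by omega⟩
    have hyT : lam + d * (Q + 1) ≤ T := by omega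
    obtain ⟨c, s2, hcs, hs2⟩ : ∃ c s2, T - (lam + d * (Q + 1)) = d * c + s2 ∧ s2 < d :=
      ⟨(T - (lam + d * (Q + 1))) / d, (T - (lam + d * (Q + 1))) % d,
        (Nat.div_add_mod _ d).symm, Nat.mod_lt _ hd0⟩
    apply mk_aap_fin d Mstar (lam + d * (Q + 1)) (lam + d * (Q + 1) + d * c) _ hd0
      (Nat.le_add_right _ _) ⟨c, by rw [Nat.add_sub_cancel_left]⟩
    · intro u hu
      exact ((hmodq hu hk).trans hmodlam.symm).trans hymod.symm
    · intro u hu hlt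
      have h1 : lam ≤ u := Nat.sInf_le hu
      omega
    · intro u hu hgt
      have h1 := le_csSup (hbdd k hk) hu
      omega
    · intro n hn
      apply coverageB d y0 Mb h0 MB M2 hd0 hy0pos @hmodq hAP hrefl hbdd hRle hR1 hh0 hMB hM2
        k _ hk (by omega) (by omega)
      exact (Nat.add_mul_mod_self_left (lam + d * (Q + 1)) d n).trans (hymod.trans hmodlam)

end StructureAux

theorem stmt8 {M : Type*} [CancelMonoid M] (hA : Atomic M)
    (hfin : (DeltaH M).Finite) (hne : (DeltaH M).Nonempty)
    (hhyp : (∃ k : ℕ, 1 ≤ k ∧ rhoK M k = ⊤) ∨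
      ∃ Mb : ℕ, ∀ k : ℕ, 2 ≤ k → rhoK M k ≤ rhoK M (k - 1) + (Mb : ℝ≥0∞)) :
    (∃ kstar Mstar : ℕ, 0 < kstar ∧ 0 < Mstar ∧ ∀ k : ℕ, kstar ≤ k →
      IsAAP (sInf (DeltaH M)) Mstar ((Nat.cast : ℕ → ℤ) '' lengthUnion M k)) ∧
    ((∀ k : ℕ, 1 ≤ k → rhoK M k < ⊤) →
      ∃ Mstar : ℕ, 0 < Mstar ∧ ∀ k : ℕ, 1 ≤ k →
        IsAAP (sInf (DeltaH M)) Mstar ((Nat.cast : ℕ → ℤ) '' lengthUnion M k)) := by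
  classical
  have hdmem : sInf (DeltaH M) ∈ DeltaH M := Nat.sInf_mem hne
  set d := sInf (DeltaH M) with hd
  obtain ⟨a, ha⟩ := Set.mem_iUnion.mp hdmem
  obtain ⟨hd0, y0, hy0m, hy0dm, -⟩ := ha
  have hau : ¬ IsUnit a := not_unit_of_distances hd0 hy0m hy0dm
  have hy0pos : 1 ≤ y0 := by
    rcases Nat.eq_zero_or_pos y0 with rfl | h
    · exact absurd hy0m (zero_not_mem_lengths hau)
    · exact h
  obtain ⟨u, hu⟩ := exists_irreducible hne
  have hrefl : ∀ k : ℕ, k ∈ lengthUnion M k := fun k => U_refl hu k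
  have hAP : ∀ k j : ℕ, j ≤ k / y0 → k + d * j ∈ lengthUnion M k :=
    AP_lemma hau hy0m hy0dm ⟨u, hu⟩ hy0pos
  have hmodq : ∀ {k x : ℕ}, x ∈ lengthUnion M k → 1 ≤ k → x ≡ k [MOD d] :=
    fun h hk => U_modeq hne h hk
  obtain ⟨Dmax, hDmax0⟩ := hfin.bddAbove
  have hDmax : ∀ e ∈ DeltaH M, e ≤ Dmax := fun e hee => hDmax0 hee
  have hudense : ∀ {k x T : ℕ}, x ∈ lengthUnion M k → 1 ≤ k → k ≤ T → T ≤ x →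
      ∃ w ∈ lengthUnion M k, T ≤ w ∧ w ≤ T + Dmax :=
    fun h hk h1 h2 => U_dense hne hDmax h hk h1 h2
  rcases hhyp with ⟨k1, hk1, htop⟩ | ⟨Mb0, hMb0⟩
  · -- some rho_k is infinite
    have hunb := unbounded_of_rhoK_top htop
    have haap := aapA d y0 k1 Dmax hd0 hy0pos hk1 @hmodq hAP hunb @hudense hrefl
    constructor
    · exact ⟨k1 + y0 * (Dmax + 1), k1 + y0 * (Dmax + 1) + d + 2, by omega, by omega,
        fun k hk => haap k hk⟩
    · intro hall
      have h2 := hall k1 hk1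
      rw [htop] at h2
      exact absurd h2 (lt_irrefl ⊤)
  · -- bounded differences
    set Mb := Mb0 + 1 with hMbdef
    have hMb : ∀ k : ℕ, 2 ≤ k → rhoK M k ≤ rhoK M (k - 1) + (Mb : ℝ≥0∞) := by
      intro k hk2
      refine le_trans (hMb0 k hk2) (add_le_add_right ?_ _)
      exact_mod_cast Nat.cast_le.mpr (Nat.le_succ Mb0)
    have hrho1 : rhoK M 1 ≤ 1 := by
      rw [rhoK]
      exact iSup₂_le fun ℓ hl => by simp [U_one hl]
    have hfinite : ∀ k : ℕ, 1 ≤ k → rhoK M k ≠ ⊤ := by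
      intro k hk
      induction k with
      | zero => omega
      | succ n ih =>
        rcases Nat.eq_zero_or_pos n with rfl | hn
        · exact (lt_of_le_of_lt hrho1 ENNReal.one_lt_top).ne
        · have h2 := hMb (n + 1) (by omega)
          have h3 : (n + 1) - 1 = n := by omega
          rw [h3] at h2
          exact ne_top_of_le_ne_top (ENNReal.add_ne_top.mpr
            ⟨ih hn, ENNReal.natCast_ne_top Mb⟩) h2
    have hbdd : ∀ k : ℕ, 1 ≤ k → BddAbove (lengthUnion M k) :=
      fun k hk => bddAbove_of_rhoK (hfinite k hk)
    have hR1 : sSup (lengthUnion M 1) = 1 :=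
      U_one (Nat.sSup_mem ⟨1, hrefl 1⟩ (hbdd 1 le_rfl))
    have hRle : ∀ k : ℕ, 2 ≤ k → sSup (lengthUnion M k) ≤ sSup (lengthUnion M (k - 1)) + Mb := by
      intro k hk2
      have h1 := hMb k hk2
      rw [rhoK_eq_max ⟨k, hrefl k⟩ (hbdd k (by omega)),
        rhoK_eq_max ⟨k - 1, hrefl (k - 1)⟩ (hbdd (k - 1) (by omega))] at h1
      have h2 : ((sSup (lengthUnion M k) : ℕ) : ℝ≥0∞) ≤
          ((sSup (lengthUnion M (k - 1)) + Mb : ℕ) : ℝ≥0∞) := by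
        rw [Nat.cast_add]; exact h1
      exact_mod_cast h2
    have haap := aapB d y0 Mb (y0 * (Mb + 2)) (y0 * (Mb + 2) * Mb + Mb + 1)
      (y0 * (Mb + 2) * Mb + Mb + 1 + y0 * (Mb + 2) + 1)
      (2 * (y0 * (Mb + 2) * Mb + Mb + 1 + y0 * (Mb + 2) + 1) + 2 * d + 2)
      hd0 hy0pos @hmodq hAP hrefl hbdd hRle hR1 rfl rfl rfl rfl
    exact ⟨⟨1, _, one_pos, by omega, fun k hk => haap k hk⟩,
      fun _ => ⟨_, by omega, fun k hk => haap k hk⟩⟩
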